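/- Let n ≥ 1 and let K be a field of characteristic zero. In the cochain complex (C^•, d) of ordered partitions of {1,…,n}, consider the totally antisymmetric element ω_n = (1/n!) Σ_{σ ∈ S_n} sgn(σ) · ({σ(1)}, {σ(2)}, …, {σ(n)}) ∈ C^n, the signed average over all ordered partitions into singletons. Then the class of ω_n in C^n / im(d : C^{n−1} → C^n) is nonzero, and it spans the top cohomology H^n(C). -/

import Mathlib

/-!
The cochain complex of ordered partitions of `{1,…,n}` (the multidegree-`(1,…,1)` part of
the cobar construction of the polynomial coalgebra `K[t₁,…,tₙ]`).

An ordered partition of `{1,…,n}` (modeled on `Fin n`) into `k` blocks is a tuple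
`(B₁,…,B_k)` of pairwise disjoint nonempty subsets covering `{1,…,n}`; equivalently,
every block is nonempty and every element lies in exactly one block.
-/

/-- `B : Fin k → Finset (Fin n)` is an ordered partition: all blocks are nonempty and
every element of `{1,…,n}` lies in exactly one block (this encodes pairwise disjointness
together with the covering property). -/
def IsOrderedPartition (n k : ℕ) (B : Fin k → Finset (Fin n)) : Prop :=
  (∀ i, (B i).Nonempty) ∧ ∀ x : Fin n, ∃! i, x ∈ B i

/-- The set of ordered partitions of `{1,…,n}` into `k` blocks. -/
def OrderedPartition (n k : ℕ) : Type :=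
  {B : Fin k → Finset (Fin n) // IsOrderedPartition n k B}

/-- `C^k`, the free `K`-vector space on the set of ordered partitions of `{1,…,n}`
into `k` blocks. -/
abbrev OPC (K : Type*) [Field K] (n k : ℕ) : Type _ :=
  OrderedPartition n k →₀ K

/-- Replace the `i`-th block of the tuple `B` by the two consecutive blocks `A`, `A'`
(at positions `i` and `i+1`), shifting the later blocks by one. -/
def splitBlocks {n k : ℕ} (B : Fin k → Finset (Fin n)) (i : Fin k)
    (A A' : Finset (Fin n)) : Fin (k + 1) → Finset (Fin n) :=
  Function.update (i.succ.insertNth A' B) i.castSucc A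

open Classical in
/-- The differential `d : C^k → C^{k+1}`.  On a basis ordered partition `(B₁,…,B_k)` it is
`d(B₁,…,B_k) = Σ_{i} (−1)^{i} Σ_{(A,A')} (B₁,…,B_{i−1}, A, A', B_{i+1},…,B_k)`, the inner
sum running over all ordered pairs `(A, A')` of disjoint nonempty subsets with
`A ∪ A' = B_i` (such a pair is the same as a subset `A ⊆ B_i` with `A' = B_i \ A`;
the resulting tuple is an ordered partition exactly when both `A` and `A'` are nonempty,
which is what the `dite` below selects).  Here `i` runs over `Fin k` (zero-based), so the
sign `(−1)^i` matches the one-based sign `(−1)^{i−1}` of the informal statement. -/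
noncomputable def dOP (K : Type*) [Field K] (n k : ℕ) :
    OPC K n k →ₗ[K] OPC K n (k + 1) :=
  Finsupp.lsum K fun B => LinearMap.toSpanSingleton K _ <|
    ∑ i : Fin k, ∑ A ∈ (B.1 i).powerset,
      if h : IsOrderedPartition n (k + 1) (splitBlocks B.1 i A (B.1 i \ A)) then
        ((-1 : K) ^ (i : ℕ)) • Finsupp.single (⟨_, h⟩ : OrderedPartition n (k + 1)) (1 : K)
      else 0

/-- The ordered partition `({σ(1)}, {σ(2)}, …, {σ(n)})` of `{1,…,n}` into singletons. -/
def singletonOP (n : ℕ) (σ : Equiv.Perm (Fin n)) : OrderedPartition n n :=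
  ⟨fun j => {σ j}, fun i => Finset.singleton_nonempty _, fun x =>
    ⟨σ.symm x, by simp, fun i hi => by
      simp only [Finset.mem_singleton] at hi
      rw [hi]; simp⟩⟩

/-- The totally antisymmetric element
`ω_n = (1/n!) Σ_{σ ∈ S_n} sgn(σ) · ({σ(1)}, …, {σ(n)}) ∈ C^n`. -/
noncomputable def omegaOP (K : Type*) [Field K] (n : ℕ) : OPC K n n :=
  (n.factorial : K)⁻¹ • ∑ σ : Equiv.Perm (Fin n),
    ((Equiv.Perm.sign σ : ℤ) : K) • Finsupp.single (singletonOP n σ) (1 : K)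


/-! ### Auxiliary lemmas -/

section Aux

variable {n k : ℕ}

theorem splitBlocks_castSucc (B : Fin k → Finset (Fin n)) (i : Fin k) (A A' : Finset (Fin n)) :
    splitBlocks B i A A' i.castSucc = A :=
  Function.update_self _ _ _

theorem succ_succAbove_self (i : Fin k) : i.succ.succAbove i = i.castSucc :=
  Fin.succAbove_of_castSucc_lt _ _ (Fin.castSucc_lt_succ (i := i))

theorem splitBlocks_succ (B : Fin k → Finset (Fin n)) (i : Fin k) (A A' : Finset (Fin n)) :
    splitBlocks B i A A' i.succ = A' := by
  rw [splitBlocks, Function.update_of_ne (Fin.castSucc_lt_succ (i := i)).ne', Fin.insertNth_apply_same]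

theorem splitBlocks_succAbove (B : Fin k → Finset (Fin n)) (i : Fin k) (A A' : Finset (Fin n))
    {j : Fin k} (hj : j ≠ i) :
    splitBlocks B i A A' (i.succ.succAbove j) = B j := by
  rw [splitBlocks, Function.update_of_ne, Fin.insertNth_apply_succAbove]
  rw [← succ_succAbove_self i]
  exact fun h => hj (Fin.succAbove_right_injective h)

/-- Index trichotomy for `Fin (k+1)` relative to `i : Fin k`. -/
theorem fin_cases3 (i : Fin k) (j : Fin (k + 1)) :
    j = i.castSucc ∨ j = i.succ ∨ ∃ j' : Fin k, j' ≠ i ∧ j = i.succ.succAbove j' := by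
  by_cases hj : j = i.succ
  · exact Or.inr (Or.inl hj)
  · obtain ⟨j', hj'⟩ := Fin.exists_succAbove_eq hj
    by_cases hji : j' = i
    · subst hji; left; rw [← hj', succ_succAbove_self]
    · exact Or.inr (Or.inr ⟨j', hji, hj'.symm⟩)

theorem sum_card_blocks {B : Fin k → Finset (Fin n)} (h : IsOrderedPartition n k B) :
    ∑ i, (B i).card = n := by
  classical
  have : ∀ i, (B i).card = ∑ x : Fin n, if x ∈ B i then 1 else 0 := by
    intro i; rw [← Finset.card_filter]
    congr 1; ext x; simp
  simp_rw [this]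
  rw [Finset.sum_comm]
  have : ∀ x : Fin n, (∑ i, if x ∈ B i then 1 else 0) = 1 := by
    intro x
    obtain ⟨i₀, hi₀, hu⟩ := h.2 x
    rw [Finset.sum_congr rfl (g := fun i => if i = i₀ then 1 else 0) fun i _ => ?_,
      Finset.sum_ite_eq' _ _ _]
    · simp
    · by_cases hx : x ∈ B i
      · rcases hu i hx with rfl; simp [hx]
      · simp only [hx, if_false]
        by_cases hii : i = i₀
        · exact absurd (hii ▸ hi₀) hx
        · simp [hii]
  simp_rw [this]
  simp

theorem blocks_card_one {B : Fin n → Finset (Fin n)} (h : IsOrderedPartition n n B) (i : Fin n) :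
    (B i).card = 1 := by
  have hsum : ∑ j, (B j).card = ∑ j : Fin n, 1 := by
    rw [sum_card_blocks h]; simp
  have := (Finset.sum_eq_sum_iff_of_le (f := fun j => 1) (g := fun j => (B j).card)
    (fun j _ => Finset.card_pos.mpr (h.1 j))).mp hsum.symm i (Finset.mem_univ i)
  omega

/-- The underlying function of an ordered partition into `n` singleton blocks. -/
noncomputable def opFun (P : OrderedPartition n n) : Fin n → Fin n :=
  fun i => (P.2.1 i).choose

theorem opFun_mem (P : OrderedPartition n n) (i : Fin n) : opFun P i ∈ P.1 i :=
  (P.2.1 i).choose_spec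

theorem block_eq_singleton (P : OrderedPartition n n) (i : Fin n) :
    P.1 i = {opFun P i} := by
  obtain ⟨a, ha⟩ := Finset.card_eq_one.mp (blocks_card_one P.2 i)
  have := opFun_mem P i
  rw [ha] at this ⊢
  rw [Finset.mem_singleton] at this
  rw [this]

theorem opFun_injective (P : OrderedPartition n n) : Function.Injective (opFun P) := by
  intro i j hij
  obtain ⟨i₀, _, hu⟩ := P.2.2 (opFun P i)
  rw [hu i (opFun_mem P i), hu j (hij ▸ opFun_mem P j)]

/-- The permutation associated to an ordered partition into `n` singleton blocks. -/
noncomputable def permOf (P : OrderedPartition n n) : Equiv.Perm (Fin n) :=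
  Equiv.ofBijective (opFun P) (Finite.injective_iff_bijective.mp (opFun_injective P))

theorem permOf_apply (P : OrderedPartition n n) (i : Fin n) : permOf P i = opFun P i := rfl

theorem block_eq_singleton' (P : OrderedPartition n n) (i : Fin n) :
    P.1 i = {permOf P i} := block_eq_singleton P i

theorem permOf_eq_of (P : OrderedPartition n n) (i : Fin n) (x : Fin n)
    (h : P.1 i = {x}) : permOf P i = x := by
  have := opFun_mem P i
  rw [h, Finset.mem_singleton] at this
  exact this

theorem op_eq_singletonOP (P : OrderedPartition n n) : P = singletonOP n (permOf P) :=
  Subtype.ext (funext fun i => block_eq_singleton' P i)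

theorem permOf_singletonOP (σ : Equiv.Perm (Fin n)) : permOf (singletonOP n σ) = σ :=
  Equiv.ext fun i => permOf_eq_of _ i (σ i) rfl

/-- Forward direction of the validity criterion. -/
theorem nonempty_of_isOP_split {B : Fin k → Finset (Fin n)} {i : Fin k} {A : Finset (Fin n)}
    (h : IsOrderedPartition n (k + 1) (splitBlocks B i A (B i \ A))) :
    A.Nonempty ∧ (B i \ A).Nonempty := by
  constructor
  · have := h.1 i.castSucc; rwa [splitBlocks_castSucc] at this
  · have := h.1 i.succ; rwa [splitBlocks_succ] at this

/-- Backward direction of the validity criterion. -/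
theorem isOP_split_of_nonempty {B : Fin k → Finset (Fin n)} (hB : IsOrderedPartition n k B)
    {i : Fin k} {A : Finset (Fin n)} (hA : A ⊆ B i)
    (h1 : A.Nonempty) (h2 : (B i \ A).Nonempty) :
    IsOrderedPartition n (k + 1) (splitBlocks B i A (B i \ A)) := by
  constructor
  · intro j
    rcases fin_cases3 i j with rfl | rfl | ⟨j', hj', rfl⟩
    · rwa [splitBlocks_castSucc]
    · rwa [splitBlocks_succ]
    · rw [splitBlocks_succAbove _ _ _ _ hj']; exact hB.1 j'
  · intro x
    obtain ⟨i₀, hi₀, hu⟩ := hB.2 x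
    have mem_imp : ∀ j : Fin (k + 1), x ∈ splitBlocks B i A (B i \ A) j →
        (j = i.castSucc ∧ x ∈ A) ∨ (j = i.succ ∧ x ∈ B i \ A) ∨
          ∃ j' : Fin k, j' ≠ i ∧ j = i.succ.succAbove j' ∧ x ∈ B j' := by
      intro j hj
      rcases fin_cases3 i j with rfl | rfl | ⟨j', hj', rfl⟩
      · rw [splitBlocks_castSucc] at hj; exact Or.inl ⟨rfl, hj⟩
      · rw [splitBlocks_succ] at hj; exact Or.inr (Or.inl ⟨rfl, hj⟩)
      · rw [splitBlocks_succAbove _ _ _ _ hj'] at hj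
        exact Or.inr (Or.inr ⟨j', hj', rfl, hj⟩)
    by_cases hii : i₀ = i
    · subst hii
      by_cases hxA : x ∈ A
      · refine ⟨i₀.castSucc, by simpa [splitBlocks_castSucc] using hxA, fun j hj => ?_⟩
        rcases mem_imp j hj with ⟨rfl, _⟩ | ⟨rfl, hmem⟩ | ⟨j', hj', rfl, hmem⟩
        · rfl
        · exact absurd hxA (Finset.mem_sdiff.mp hmem).2
        · exact absurd (hu j' hmem) hj'
      · refine ⟨i₀.succ,
          by simpa [splitBlocks_succ] using Finset.mem_sdiff.mpr ⟨hi₀, hxA⟩,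
          fun j hj => ?_⟩
        rcases mem_imp j hj with ⟨rfl, hmem⟩ | ⟨rfl, _⟩ | ⟨j', hj', rfl, hmem⟩
        · exact absurd hmem hxA
        · rfl
        · exact absurd (hu j' hmem) hj'
    · refine ⟨i.succ.succAbove i₀,
        by simpa [splitBlocks_succAbove B i A (B i \ A) hii] using hi₀, fun j hj => ?_⟩
      rcases mem_imp j hj with ⟨rfl, hmem⟩ | ⟨rfl, hmem⟩ | ⟨j', hj', rfl, hmem⟩
      · exact absurd (hu i (hA hmem)).symm hii
      · exact absurd (hu i (Finset.mem_sdiff.mp hmem).1).symm hii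
      · rw [hu j' hmem]

end Aux

section TopDegree

variable {k : ℕ}

/-- The two splittings of a block into `A` and its complement, in the two orders, give
permutations differing by an adjacent transposition. -/
theorem permOf_split_swap {B : Fin k → Finset (Fin (k + 1))} {i : Fin k}
    {A : Finset (Fin (k + 1))} (hA : A ⊆ B i)
    (h1 : IsOrderedPartition (k + 1) (k + 1) (splitBlocks B i A (B i \ A)))
    (h2 : IsOrderedPartition (k + 1) (k + 1)
      (splitBlocks B i (B i \ A) (B i \ (B i \ A)))) :
    permOf (⟨_, h2⟩ : OrderedPartition (k + 1) (k + 1)) =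
      permOf (⟨_, h1⟩ : OrderedPartition (k + 1) (k + 1)) * Equiv.swap i.castSucc i.succ := by
  have hdd : B i \ (B i \ A) = A := Finset.sdiff_sdiff_eq_self hA
  set P1 : OrderedPartition (k + 1) (k + 1) := ⟨_, h1⟩
  set P2 : OrderedPartition (k + 1) (k + 1) := ⟨_, h2⟩
  refine Equiv.ext fun j => ?_
  rcases fin_cases3 i j with rfl | rfl | ⟨j', hj', rfl⟩
  · rw [Equiv.Perm.mul_apply, Equiv.swap_apply_left]
    refine permOf_eq_of P2 _ _ ?_
    show splitBlocks B i (B i \ A) (B i \ (B i \ A)) i.castSucc = _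
    rw [splitBlocks_castSucc, ← splitBlocks_succ B i A (B i \ A)]
    exact block_eq_singleton' P1 i.succ
  · rw [Equiv.Perm.mul_apply, Equiv.swap_apply_right]
    refine permOf_eq_of P2 _ _ ?_
    show splitBlocks B i (B i \ A) (B i \ (B i \ A)) i.succ = _
    rw [splitBlocks_succ, hdd, ← splitBlocks_castSucc B i A (B i \ A)]
    exact block_eq_singleton' P1 i.castSucc
  · have hne1 : i.succ.succAbove j' ≠ i.castSucc := by
      rw [← succ_succAbove_self i]
      exact fun h => hj' (Fin.succAbove_right_injective h)
    have hne2 : i.succ.succAbove j' ≠ i.succ := Fin.succAbove_ne _ _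
    rw [Equiv.Perm.mul_apply, Equiv.swap_apply_of_ne_of_ne hne1 hne2]
    refine permOf_eq_of P2 _ _ ?_
    show splitBlocks B i (B i \ A) (B i \ (B i \ A)) (i.succ.succAbove j') = _
    rw [splitBlocks_succAbove _ _ _ _ hj', ← splitBlocks_succAbove B i A (B i \ A) hj']
    exact block_eq_singleton' P1 _

end TopDegree

section Phi

variable (K : Type*) [Field K] (k : ℕ)

/-- The sign functional on the top-degree space. -/
noncomputable def phiOP : OPC K (k + 1) (k + 1) →ₗ[K] K :=
  Finsupp.linearCombination K fun P : OrderedPartition (k + 1) (k + 1) =>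
    ((Equiv.Perm.sign (permOf P) : ℤ) : K)

theorem phiOP_single (P : OrderedPartition (k + 1) (k + 1)) (c : K) :
    phiOP K k (Finsupp.single P c) = c * ((Equiv.Perm.sign (permOf P) : ℤ) : K) := by
  simp [phiOP]

theorem phiOP_comp_d (x : OPC K (k + 1) k) : phiOP K k (dOP K (k + 1) k x) = 0 := by
  suffices h : ∀ B : OrderedPartition (k + 1) k,
      phiOP K k (dOP K (k + 1) k (Finsupp.single B 1)) = 0 by
    have : (phiOP K k).comp (dOP K (k + 1) k) = 0 := by
      apply Finsupp.lhom_ext'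
      intro B
      apply LinearMap.ext_ring
      simpa using h B
    calc phiOP K k (dOP K (k + 1) k x) = ((phiOP K k).comp (dOP K (k + 1) k)) x := rfl
    _ = 0 := by rw [this]; rfl
  intro B
  rw [dOP, Finsupp.lsum_single, LinearMap.toSpanSingleton_apply, one_smul, map_sum]
  refine Finset.sum_eq_zero fun i _ => ?_
  rw [map_sum]
  refine Finset.sum_involution (fun A _ => B.1 i \ A) ?_ ?_ (fun A hA => by simp) ?_
  · -- cancellation
    intro A hA
    rw [Finset.mem_powerset] at hA
    have hdd : B.1 i \ (B.1 i \ A) = A := Finset.sdiff_sdiff_eq_self hA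
    by_cases h1 : IsOrderedPartition (k + 1) (k + 1) (splitBlocks B.1 i A (B.1 i \ A))
    · have h2 : IsOrderedPartition (k + 1) (k + 1)
          (splitBlocks B.1 i (B.1 i \ A) (B.1 i \ (B.1 i \ A))) :=
        isOP_split_of_nonempty (A := B.1 i \ A) B.2 Finset.sdiff_subset
          (nonempty_of_isOP_split h1).2 (by rw [hdd]; exact (nonempty_of_isOP_split h1).1)
      erw [dif_pos h1, dif_pos h2]
      erw [map_smul, map_smul, phiOP_single, phiOP_single,
        permOf_split_swap hA h1 h2]
      rw [map_mul, Equiv.Perm.sign_swap (Fin.castSucc_lt_succ (i := i)).ne]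
      rw [smul_eq_mul, smul_eq_mul]
      push_cast
      ring
    · have h2 : ¬ IsOrderedPartition (k + 1) (k + 1)
          (splitBlocks B.1 i (B.1 i \ A) (B.1 i \ (B.1 i \ A))) := by
        intro h2
        obtain ⟨hn1, hn2⟩ := nonempty_of_isOP_split (A := B.1 i \ A) h2
        rw [hdd] at hn2
        exact h1 (isOP_split_of_nonempty B.2 hA hn2 hn1)
      erw [dif_neg h1, dif_neg h2]; simp
  · -- no fixed points among nonzero terms
    intro A hA hne
    by_cases h1 : IsOrderedPartition (k + 1) (k + 1) (splitBlocks B.1 i A (B.1 i \ A))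
    · obtain ⟨⟨x, hx⟩, _⟩ := nonempty_of_isOP_split h1
      intro heq
      rw [← heq] at hx
      exact (Finset.mem_sdiff.mp hx).2 (heq ▸ hx)
    · erw [dif_neg h1, map_zero] at hne
      exact absurd rfl hne
  · -- involutivity
    intro A hA
    rw [Finset.mem_powerset] at hA
    exact Finset.sdiff_sdiff_eq_self hA

end Phi


section Merge

variable {k : ℕ}

/-- The ordered partition obtained from `({σ 0},…,{σ k})` by merging the blocks at
positions `i` and `i+1`. -/
def mergeBlocks (σ : Equiv.Perm (Fin (k + 1))) (i : Fin k) : Fin k → Finset (Fin (k + 1)) :=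
  fun j => if j = i then {σ i.castSucc, σ i.succ} else {σ (i.succ.succAbove j)}

theorem mergeBlocks_same (σ : Equiv.Perm (Fin (k + 1))) (i : Fin k) :
    mergeBlocks σ i i = {σ i.castSucc, σ i.succ} := if_pos rfl

theorem mergeBlocks_ne (σ : Equiv.Perm (Fin (k + 1))) (i : Fin k) {j : Fin k} (h : j ≠ i) :
    mergeBlocks σ i j = {σ (i.succ.succAbove j)} := if_neg h

theorem succAbove_ne_castSucc (i : Fin k) {j : Fin k} (hj : j ≠ i) :
    i.succ.succAbove j ≠ i.castSucc := by
  rw [← succ_succAbove_self i]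
  exact fun h => hj (Fin.succAbove_right_injective h)

theorem isOP_mergeBlocks (σ : Equiv.Perm (Fin (k + 1))) (i : Fin k) :
    IsOrderedPartition (k + 1) k (mergeBlocks σ i) := by
  constructor
  · intro j
    by_cases h : j = i
    · rw [h, mergeBlocks_same]; exact Finset.insert_nonempty _ _
    · rw [mergeBlocks_ne σ i h]; exact Finset.singleton_nonempty _
  · intro x
    have hxy : x = σ (σ.symm x) := (σ.apply_symm_apply x).symm
    set y := σ.symm x with hy
    by_cases h1 : y = i.castSucc ∨ y = i.succ
    · refine ⟨i, ?_, ?_⟩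
      · show x ∈ mergeBlocks σ i i
        rw [mergeBlocks_same, Finset.mem_insert, Finset.mem_singleton]
        rcases h1 with h | h
        · exact Or.inl (by rw [hxy, h])
        · exact Or.inr (by rw [hxy, h])
      · intro j hj
        by_cases hji : j = i
        · exact hji
        · exfalso
          have hj' : x ∈ mergeBlocks σ i j := hj
          rw [mergeBlocks_ne σ i hji, Finset.mem_singleton] at hj'
          have : y = i.succ.succAbove j := by
            rw [hy, hj', Equiv.symm_apply_apply]
          rcases h1 with h | h
          · exact succAbove_ne_castSucc i hji (this ▸ h : i.succ.succAbove j = i.castSucc)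
          · exact Fin.succAbove_ne i.succ j (this ▸ h : i.succ.succAbove j = i.succ)
    · push_neg at h1
      obtain ⟨j', hj'⟩ := Fin.exists_succAbove_eq (h1.2 : y ≠ i.succ)
      have hj'i : j' ≠ i := by
        intro h
        exact h1.1 (by rw [← hj', h, succ_succAbove_self])
      refine ⟨j', ?_, ?_⟩
      · show x ∈ mergeBlocks σ i j'
        rw [mergeBlocks_ne σ i hj'i, Finset.mem_singleton, hj', hxy]
      · intro j hj
        have hj'' : x ∈ mergeBlocks σ i j := hj
        by_cases hji : j = i
        · exfalso
          rw [hji, mergeBlocks_same, Finset.mem_insert, Finset.mem_singleton] at hj''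
          rcases hj'' with h | h
          · exact h1.1 (by rw [hy, h, Equiv.symm_apply_apply])
          · exact h1.2 (by rw [hy, h, Equiv.symm_apply_apply])
        · rw [mergeBlocks_ne σ i hji, Finset.mem_singleton] at hj''
          have : i.succ.succAbove j = y := by rw [hy, hj'', Equiv.symm_apply_apply]
          exact Fin.succAbove_right_injective (by rw [this, ← hj'])

theorem subset_pair_cases {α : Type*} [DecidableEq α] {a b : α} {A : Finset α}
    (hA : A ⊆ {a, b}) (h1 : A.Nonempty) (h2 : ({a, b} \ A : Finset α).Nonempty) :
    A = {a} ∨ A = {b} := by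
  by_cases ha : a ∈ A <;> by_cases hb : b ∈ A
  · exfalso
    have : ({a, b} : Finset α) ⊆ A := by
      intro x hx
      rcases Finset.mem_insert.mp hx with rfl | hx
      · exact ha
      · exact (Finset.mem_singleton.mp hx) ▸ hb
    obtain ⟨x, hx⟩ := h2
    rw [Finset.mem_sdiff] at hx
    exact hx.2 (this hx.1)
  · left
    apply Finset.Subset.antisymm
    · intro x hx
      rcases Finset.mem_insert.mp (hA hx) with rfl | hx'
      · exact Finset.mem_singleton_self _
      · exact absurd ((Finset.mem_singleton.mp hx') ▸ hx) hb
    · simpa using ha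
  · right
    apply Finset.Subset.antisymm
    · intro x hx
      rcases Finset.mem_insert.mp (hA hx) with rfl | hx'
      · exact absurd hx ha
      · exact hx'
    · simpa using hb
  · exfalso
    obtain ⟨x, hx⟩ := h1
    rcases Finset.mem_insert.mp (hA hx) with rfl | hx'
    · exact ha hx
    · exact hb ((Finset.mem_singleton.mp hx') ▸ hx)

theorem pair_sdiff_left {α : Type*} [DecidableEq α] {a b : α} (h : a ≠ b) :
    ({a, b} : Finset α) \ {a} = {b} := by
  ext x
  simp only [Finset.mem_sdiff, Finset.mem_insert, Finset.mem_singleton]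
  constructor
  · rintro ⟨rfl | rfl, hx⟩
    · exact absurd rfl hx
    · rfl
  · rintro rfl
    exact ⟨Or.inr rfl, fun hxa => h hxa.symm⟩

theorem pair_sdiff_right {α : Type*} [DecidableEq α] {a b : α} (h : a ≠ b) :
    ({a, b} : Finset α) \ {b} = {a} := by
  ext x
  simp only [Finset.mem_sdiff, Finset.mem_insert, Finset.mem_singleton]
  constructor
  · rintro ⟨rfl | rfl, hx⟩
    · rfl
    · exact absurd rfl hx
  · rintro rfl
    exact ⟨Or.inl rfl, h⟩

theorem sigma_castSucc_ne (σ : Equiv.Perm (Fin (k + 1))) (i : Fin k) :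
    σ i.castSucc ≠ σ i.succ :=
  fun h => (Fin.castSucc_lt_succ (i := i)).ne (σ.injective h)

theorem split_merge_left (σ : Equiv.Perm (Fin (k + 1))) (i : Fin k) :
    splitBlocks (mergeBlocks σ i) i {σ i.castSucc}
      (mergeBlocks σ i i \ {σ i.castSucc}) = (singletonOP (k + 1) σ).1 := by
  funext j
  rcases fin_cases3 i j with rfl | rfl | ⟨j', hj', rfl⟩
  · rw [splitBlocks_castSucc]; rfl
  · rw [splitBlocks_succ, mergeBlocks_same, pair_sdiff_left (sigma_castSucc_ne σ i)]; rfl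
  · rw [splitBlocks_succAbove _ _ _ _ hj', mergeBlocks_ne σ i hj']; rfl

theorem split_merge_right (σ : Equiv.Perm (Fin (k + 1))) (i : Fin k) :
    splitBlocks (mergeBlocks σ i) i {σ i.succ}
      (mergeBlocks σ i i \ {σ i.succ}) =
      (singletonOP (k + 1) (σ * Equiv.swap i.castSucc i.succ)).1 := by
  funext j
  rcases fin_cases3 i j with rfl | rfl | ⟨j', hj', rfl⟩
  · rw [splitBlocks_castSucc]
    show _ = {(σ * Equiv.swap i.castSucc i.succ) i.castSucc}
    rw [Equiv.Perm.mul_apply, Equiv.swap_apply_left]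
  · rw [splitBlocks_succ, mergeBlocks_same, pair_sdiff_right (sigma_castSucc_ne σ i)]
    show _ = {(σ * Equiv.swap i.castSucc i.succ) i.succ}
    rw [Equiv.Perm.mul_apply, Equiv.swap_apply_right]
  · rw [splitBlocks_succAbove _ _ _ _ hj', mergeBlocks_ne σ i hj']
    show _ = {(σ * Equiv.swap i.castSucc i.succ) (i.succ.succAbove j')}
    rw [Equiv.Perm.mul_apply,
      Equiv.swap_apply_of_ne_of_ne (succAbove_ne_castSucc i hj') (Fin.succAbove_ne _ _)]

theorem isOP_split_merge_left (σ : Equiv.Perm (Fin (k + 1))) (i : Fin k) :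
    IsOrderedPartition (k + 1) (k + 1) (splitBlocks (mergeBlocks σ i) i {σ i.castSucc}
      (mergeBlocks σ i i \ {σ i.castSucc})) := by
  rw [split_merge_left]
  exact (singletonOP (k + 1) σ).2

theorem isOP_split_merge_right (σ : Equiv.Perm (Fin (k + 1))) (i : Fin k) :
    IsOrderedPartition (k + 1) (k + 1) (splitBlocks (mergeBlocks σ i) i {σ i.succ}
      (mergeBlocks σ i i \ {σ i.succ})) := by
  rw [split_merge_right]
  exact (singletonOP (k + 1) (σ * Equiv.swap i.castSucc i.succ)).2

variable (K : Type*) [Field K]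

theorem dOP_merge (σ : Equiv.Perm (Fin (k + 1))) (i : Fin k) :
    dOP K (k + 1) k (Finsupp.single ⟨mergeBlocks σ i, isOP_mergeBlocks σ i⟩ 1) =
      ((-1 : K) ^ (i : ℕ)) • (Finsupp.single (singletonOP (k + 1) σ) 1 +
        Finsupp.single (singletonOP (k + 1) (σ * Equiv.swap i.castSucc i.succ)) 1) := by
  rw [dOP]; erw [Finsupp.lsum_single]; rw [LinearMap.toSpanSingleton_apply, one_smul]
  rw [Finset.sum_eq_single_of_mem i (Finset.mem_univ i) ?other]
  case other =>
    intro j _ hji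
    refine Finset.sum_eq_zero fun A hA => ?_
    rw [Finset.mem_powerset] at hA
    refine dif_neg fun hvalid => ?_
    obtain ⟨hn1, hn2⟩ := nonempty_of_isOP_split hvalid
    have hcoe : (⟨mergeBlocks σ i, isOP_mergeBlocks σ i⟩ :
        OrderedPartition (k + 1) k).1 = mergeBlocks σ i := rfl
    rw [hcoe] at hA hn2
    have hAj : A ⊆ ({σ (i.succ.succAbove j)} : Finset (Fin (k + 1))) := by
      rwa [← mergeBlocks_ne σ i hji]
    rcases Finset.subset_singleton_iff.mp hAj with rfl | rfl
    · exact hn1.ne_empty rfl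
    · rw [mergeBlocks_ne σ i hji, Finset.sdiff_self] at hn2
      exact hn2.ne_empty rfl
  · have hsub : ({({σ i.castSucc} : Finset (Fin (k + 1))), {σ i.succ}} : Finset _) ⊆
        (mergeBlocks σ i i).powerset := by
      intro A hA
      rw [Finset.mem_powerset, mergeBlocks_same]
      rcases Finset.mem_insert.mp hA with rfl | hA
      · exact Finset.singleton_subset_iff.mpr (Finset.mem_insert_self _ _)
      · rw [Finset.mem_singleton.mp hA]
        exact Finset.singleton_subset_iff.mpr
          (Finset.mem_insert.mpr (Or.inr (Finset.mem_singleton_self _)))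
    rw [← Finset.sum_subset hsub ?vanish]
    case vanish =>
      intro A hA hA'
      rw [Finset.mem_powerset] at hA
      refine dif_neg fun hvalid => ?_
      obtain ⟨hn1, hn2⟩ := nonempty_of_isOP_split hvalid
      have hcoe : (⟨mergeBlocks σ i, isOP_mergeBlocks σ i⟩ :
          OrderedPartition (k + 1) k).1 = mergeBlocks σ i := rfl
      rw [hcoe] at hn2
      rw [mergeBlocks_same] at hA hn2
      rcases subset_pair_cases hA hn1 hn2 with rfl | rfl
      · exact hA' (Finset.mem_insert_self _ _)
      · exact hA' (Finset.mem_insert.mpr (Or.inr (Finset.mem_singleton_self _)))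
    have hne : ({σ i.castSucc} : Finset (Fin (k + 1))) ≠ {σ i.succ} := by
      intro h
      exact sigma_castSucc_ne σ i (Finset.singleton_injective h)
    rw [Finset.sum_pair hne]; erw [dif_pos (isOP_split_merge_left σ i),
      dif_pos (isOP_split_merge_right σ i)]
    rw [show (⟨_, isOP_split_merge_left σ i⟩ : OrderedPartition (k + 1) (k + 1)) =
      singletonOP (k + 1) σ from Subtype.ext (split_merge_left σ i)]
    rw [show (⟨_, isOP_split_merge_right σ i⟩ : OrderedPartition (k + 1) (k + 1)) =
      singletonOP (k + 1) (σ * Equiv.swap i.castSucc i.succ) from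
      Subtype.ext (split_merge_right σ i)]
    rw [smul_add]
    rfl

theorem rel_mem_range (σ : Equiv.Perm (Fin (k + 1))) (i : Fin k) :
    Finsupp.single (singletonOP (k + 1) σ) (1 : K) +
      Finsupp.single (singletonOP (k + 1) (σ * Equiv.swap i.castSucc i.succ)) 1 ∈
      LinearMap.range (dOP K (k + 1) k) := by
  refine ⟨((-1 : K) ^ (i : ℕ)) •
    Finsupp.single ⟨mergeBlocks σ i, isOP_mergeBlocks σ i⟩ 1, ?_⟩
  rw [map_smul, dOP_merge, smul_smul, ← pow_add,
    Even.neg_one_pow ⟨(i : ℕ), rfl⟩, one_smul]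

end Merge

section Quot

variable (K : Type*) [Field K] (k : ℕ)

/-- Class of a basis vector in the top quotient. -/
noncomputable def qcl (σ : Equiv.Perm (Fin (k + 1))) :
    OPC K (k + 1) (k + 1) ⧸ LinearMap.range (dOP K (k + 1) k) :=
  Submodule.Quotient.mk (Finsupp.single (singletonOP (k + 1) σ) (1 : K))

theorem qcl_swap (σ : Equiv.Perm (Fin (k + 1))) (i : Fin k) :
    qcl K k (σ * Equiv.swap i.castSucc i.succ) = - qcl K k σ := by
  have h0 : Submodule.Quotient.mk (p := LinearMap.range (dOP K (k + 1) k))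
      (Finsupp.single (singletonOP (k + 1) σ) (1 : K) +
        Finsupp.single (singletonOP (k + 1) (σ * Equiv.swap i.castSucc i.succ)) 1) = 0 :=
    (Submodule.Quotient.mk_eq_zero _).mpr (rel_mem_range K σ i)
  rw [Submodule.Quotient.mk_add] at h0
  exact eq_neg_of_add_eq_zero_right h0

theorem qcl_sign (σ : Equiv.Perm (Fin (k + 1))) :
    qcl K k σ = ((Equiv.Perm.sign σ : ℤ) : K) • qcl K k 1 := by
  have hσ : σ ∈ Submonoid.closure
      (Set.range fun i : Fin k => Equiv.swap i.castSucc i.succ) := by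
    rw [Equiv.Perm.mclosure_swap_castSucc_succ]; trivial
  refine Submonoid.induction_of_closure_eq_top_right
    (Equiv.Perm.mclosure_swap_castSucc_succ k) σ ?_ ?_
  · simp
  · rintro τ y ⟨i, rfl⟩ ih
    rw [qcl_swap, ih, map_mul, Equiv.Perm.sign_swap (Fin.castSucc_lt_succ (i := i)).ne]
    push_cast
    rw [mul_neg_one, neg_smul]

end Quot


section Final

variable (K : Type*) [Field K] [CharZero K] (k : ℕ)

theorem sign_sq (σ : Equiv.Perm (Fin (k + 1))) :
    ((Equiv.Perm.sign σ : ℤ) : K) * ((Equiv.Perm.sign σ : ℤ) : K) = 1 := by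
  rw [← Int.cast_mul, ← Units.val_mul, Int.units_mul_self]
  simp

theorem phi_omega : phiOP K k (omegaOP K (k + 1)) = 1 := by
  rw [omegaOP, map_smul, map_sum]
  have h1 : ∀ σ : Equiv.Perm (Fin (k + 1)),
      phiOP K k (((Equiv.Perm.sign σ : ℤ) : K) •
        Finsupp.single (singletonOP (k + 1) σ) (1 : K)) = 1 := by
    intro σ
    rw [map_smul, phiOP_single, permOf_singletonOP, one_mul, smul_eq_mul, sign_sq]
  rw [Finset.sum_congr rfl fun σ _ => h1 σ, Finset.sum_const, Finset.card_univ, Fintype.card_perm,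
    Fintype.card_fin, smul_eq_mul, nsmul_eq_mul, mul_one,
    inv_mul_cancel₀ (Nat.cast_ne_zero.mpr (Nat.factorial_ne_zero _))]

theorem mk_omega :
    (LinearMap.range (dOP K (k + 1) k)).mkQ (omegaOP K (k + 1)) = qcl K k 1 := by
  rw [omegaOP, map_smul, map_sum]
  have h1 : ∀ σ : Equiv.Perm (Fin (k + 1)),
      (LinearMap.range (dOP K (k + 1) k)).mkQ
        (((Equiv.Perm.sign σ : ℤ) : K) •
          Finsupp.single (singletonOP (k + 1) σ) (1 : K)) = qcl K k 1 := by
    intro σ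
    rw [map_smul, Submodule.mkQ_apply]
    show ((Equiv.Perm.sign σ : ℤ) : K) • qcl K k σ = qcl K k 1
    rw [qcl_sign, smul_smul, sign_sq, one_smul]
  rw [Finset.sum_congr rfl fun σ _ => h1 σ, Finset.sum_const, Finset.card_univ, Fintype.card_perm,
    Fintype.card_fin, ← Nat.cast_smul_eq_nsmul K, smul_smul,
    inv_mul_cancel₀ (Nat.cast_ne_zero.mpr (Nat.factorial_ne_zero _)), one_smul]

end Final

/-- the class of `ω_n` in `C^n / im(d : C^{n−1} → C^n)` is nonzero and spans
the top cohomology `H^n(C)`.  (Here `n ≥ 1` is written as `m + 1`.) -/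
theorem statement2 (K : Type*) [Field K] [CharZero K] (m : ℕ) :
    (Submodule.Quotient.mk (omegaOP K (m + 1)) ≠
        (0 : OPC K (m + 1) (m + 1) ⧸ LinearMap.range (dOP K (m + 1) m))) ∧
      Submodule.span K
          {(Submodule.Quotient.mk (omegaOP K (m + 1)) :
            OPC K (m + 1) (m + 1) ⧸ LinearMap.range (dOP K (m + 1) m))} = ⊤ := by
  constructor
  · intro h
    rw [Submodule.Quotient.mk_eq_zero] at h
    obtain ⟨x, hx⟩ := h
    have h1 : phiOP K m (omegaOP K (m + 1)) = 0 := by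
      rw [← hx]; exact phiOP_comp_d K m x
    rw [phi_omega] at h1
    exact one_ne_zero h1
  · have homega : (Submodule.Quotient.mk (omegaOP K (m + 1)) :
        OPC K (m + 1) (m + 1) ⧸ LinearMap.range (dOP K (m + 1) m)) = qcl K m 1 := by
      rw [← Submodule.mkQ_apply, mk_omega]
    rw [homega, eq_top_iff]
    rintro x -
    obtain ⟨y, rfl⟩ := Submodule.Quotient.mk_surjective _ x
    induction y using Finsupp.induction_linear with
    | zero => rw [Submodule.Quotient.mk_zero]; exact zero_mem _
    | add f g hf hg => rw [Submodule.Quotient.mk_add]; exact add_mem hf hg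
    | single P c =>
      have hc : (Finsupp.single P c : OPC K (m + 1) (m + 1)) =
          c • Finsupp.single P 1 := by
        rw [Finsupp.smul_single, smul_eq_mul, mul_one]
      rw [hc, Submodule.Quotient.mk_smul]
      refine Submodule.smul_mem _ _ ?_
      have hP : (Submodule.Quotient.mk (Finsupp.single P (1 : K)) :
          OPC K (m + 1) (m + 1) ⧸ LinearMap.range (dOP K (m + 1) m)) = qcl K m (permOf P) := by
        rw [qcl, ← op_eq_singletonOP P]
      rw [hP]
      rw [qcl_sign K m (permOf P)]
      exact Submodule.smul_mem _ _ (Submodule.mem_span_singleton_self _)
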